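/- Let X and Y be finite simple graphs, each with at least one vertex. Then the independence number of the derived graph of the Cartesian product X □ Y satisfies α((X □ Y)') ≤ α(X' □ Y) + α(X □ Y'), where X' and Y' are the derived graphs of X and Y. -/

import Mathlib

open Finset

/-- The independence number: the largest size of a set of pairwise non-adjacent vertices. -/
noncomputable def indepNum {V : Type*} (G : SimpleGraph V) : ℕ :=
  sSup {n | ∃ s : Finset V, (∀ v ∈ s, ∀ w ∈ s, ¬ G.Adj v w) ∧ s.card = n}

/-- The degree of a vertex: the number of its neighbours. -/
noncomputable def deg {V : Type*} (G : SimpleGraph V) (v : V) : ℕ :=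
  (G.neighborSet v).ncard

/-- The minimal degree. -/
noncomputable def minDeg {V : Type*} (G : SimpleGraph V) : ℕ :=
  sInf (Set.range (deg G))

/-- The maximal degree. -/
noncomputable def maxDeg {V : Type*} (G : SimpleGraph V) : ℕ :=
  sSup (Set.range (deg G))

/-- The largest eigenvalue of the Laplacian matrix `L = D - A`. -/
noncomputable def lapMax {V : Type*} [Fintype V] (G : SimpleGraph V) : ℝ :=
  letI := Classical.decEq V
  letI := Classical.decRel G.Adj
  ⨆ i, (SimpleGraph.posSemidef_lapMatrix ℝ G).1.eigenvalues i

/-- The derived graph: the induced subgraph on the vertices of non-maximal degree. -/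
noncomputable def derived {V : Type*} (G : SimpleGraph V) :
    SimpleGraph {v : V | deg G v < maxDeg G} :=
  G.induce {v : V | deg G v < maxDeg G}

lemma deg_eq_degree {V : Type*} [Fintype V] (G : SimpleGraph V) [DecidableRel G.Adj] (v : V) :
    deg G v = G.degree v := by
  rw [deg, SimpleGraph.degree, SimpleGraph.neighborFinset, Set.ncard_eq_toFinset_card']

lemma deg_le_maxDeg {V : Type*} [Fintype V] (G : SimpleGraph V) (v : V) :
    deg G v ≤ maxDeg G :=
  le_csSup (Set.Finite.bddAbove (Set.finite_range _)) ⟨v, rfl⟩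

lemma exists_maxDeg {V : Type*} [Fintype V] [Nonempty V] (G : SimpleGraph V) :
    ∃ v, deg G v = maxDeg G := by
  have : maxDeg G ∈ Set.range (deg G) :=
    Nat.sSup_mem (Set.range_nonempty _) (Set.Finite.bddAbove (Set.finite_range _))
  exact this

lemma deg_boxProd {V W : Type*} [Fintype V] [Fintype W]
    (X : SimpleGraph V) (Y : SimpleGraph W) (p : V × W) :
    deg (X.boxProd Y) p = deg X p.1 + deg Y p.2 := by
  classical
  rw [deg_eq_degree, deg_eq_degree, deg_eq_degree, SimpleGraph.degree_boxProd]

lemma maxDeg_boxProd {V W : Type*} [Fintype V] [Fintype W] [Nonempty V] [Nonempty W]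
    (X : SimpleGraph V) (Y : SimpleGraph W) :
    maxDeg (X.boxProd Y) = maxDeg X + maxDeg Y := by
  apply le_antisymm
  · apply csSup_le (Set.range_nonempty _)
    rintro n ⟨p, rfl⟩
    rw [deg_boxProd]
    exact Nat.add_le_add (deg_le_maxDeg X p.1) (deg_le_maxDeg Y p.2)
  · obtain ⟨x, hx⟩ := exists_maxDeg X
    obtain ⟨y, hy⟩ := exists_maxDeg Y
    have : deg (X.boxProd Y) (x, y) = maxDeg X + maxDeg Y := by
      rw [deg_boxProd]; rw [hx, hy]
    calc maxDeg X + maxDeg Y = deg (X.boxProd Y) (x, y) := this.symm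
      _ ≤ maxDeg (X.boxProd Y) := deg_le_maxDeg _ _

lemma indep_card_le_indepNum {V : Type*} [Fintype V] (G : SimpleGraph V) (s : Finset V)
    (hs : ∀ v ∈ s, ∀ w ∈ s, ¬ G.Adj v w) : s.card ≤ indepNum G := by
  refine le_csSup ⟨Fintype.card V, ?_⟩ ⟨s, hs, rfl⟩
  rintro n ⟨t, _, rfl⟩
  exact Finset.card_le_univ t

/-- The independence number of the derived graph of a Cartesian product obeys the
Leibniz-like rule `α((X □ Y)') ≤ α(X' □ Y) + α(X □ Y')`. -/
theorem indepNum_derived_boxProd_le {V W : Type*} [Fintype V] [Fintype W]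
    [Nonempty V] [Nonempty W] (X : SimpleGraph V) (Y : SimpleGraph W) :
    indepNum (derived (X.boxProd Y))
      ≤ indepNum ((derived X).boxProd Y) + indepNum (X.boxProd (derived Y)) := by
  classical
  set Z := X.boxProd Y with hZ
  -- obtain a maximum independent set in derived Z
  have hbdd : BddAbove {n | ∃ s : Finset {v : V × W | deg Z v < maxDeg Z},
      (∀ v ∈ s, ∀ w ∈ s, ¬ (derived Z).Adj v w) ∧ s.card = n} := by
    refine ⟨Fintype.card {v : V × W | deg Z v < maxDeg Z}, ?_⟩
    rintro n ⟨t, _, rfl⟩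
    exact Finset.card_le_univ t
  have hne : {n | ∃ s : Finset {v : V × W | deg Z v < maxDeg Z},
      (∀ v ∈ s, ∀ w ∈ s, ¬ (derived Z).Adj v w) ∧ s.card = n}.Nonempty :=
    ⟨0, ∅, by simp, rfl⟩
  obtain ⟨s, hs, hcard⟩ : ∃ s : Finset {v : V × W | deg Z v < maxDeg Z},
      (∀ v ∈ s, ∀ w ∈ s, ¬ (derived Z).Adj v w) ∧ s.card = indepNum (derived Z) :=
    Nat.sSup_mem hne hbdd
  rw [← hcard]
  -- split s
  set s1 := s.filter (fun p => deg X p.1.1 < maxDeg X) with hs1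
  set s2 := s.filter (fun p => ¬ deg X p.1.1 < maxDeg X) with hs2
  have hsplit : s.card ≤ s1.card + s2.card := by
    rw [hs1, hs2, Finset.card_filter_add_card_filter_not]
  have memderiv : ∀ p ∈ s, deg X (p : {v : V × W | deg Z v < maxDeg Z}).1.1 < maxDeg X ∨
      deg Y (p : {v : V × W | deg Z v < maxDeg Z}).1.2 < maxDeg Y := by
    intro p _
    have hp : deg Z p.1 < maxDeg Z := p.2
    have hp' : deg X p.1.1 + deg Y p.1.2 < maxDeg X + maxDeg Y := by
      rw [← deg_boxProd X Y p.1, ← maxDeg_boxProd X Y]; exact hp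
    by_contra hcon
    push_neg at hcon
    have h1 := deg_le_maxDeg X p.1.1
    have h2 := deg_le_maxDeg Y p.1.2
    omega

  have adjZ : ∀ p q : {v : V × W | deg Z v < maxDeg Z},
      Z.Adj p.1 q.1 → (derived Z).Adj p q := fun p q h => h
  refine hsplit.trans (Nat.add_le_add ?_ ?_)
  · -- s1 maps into (derived X) □ Y
    let g : {p // p ∈ s1} → {v : V | deg X v < maxDeg X} × W :=
      fun q => (⟨q.1.1.1, (Finset.mem_filter.mp q.2).2⟩, q.1.1.2)
    have hginj : Function.Injective g := by
      intro p q h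
      have h1 : p.1.1.1 = q.1.1.1 := congrArg (fun z => (z.1 : V)) h
      have h2 : p.1.1.2 = q.1.1.2 := congrArg (fun z : {v : V | deg X v < maxDeg X} × W => z.2) h
      exact Subtype.ext (Subtype.ext (Prod.ext h1 h2))
    have hindep : ∀ v ∈ s1.attach.image g, ∀ w ∈ s1.attach.image g,
        ¬ ((derived X).boxProd Y).Adj v w := by
      simp only [Finset.mem_image, Finset.mem_attach, true_and]
      rintro v ⟨p, rfl⟩ w ⟨q, rfl⟩ hadj
      have hps : p.1 ∈ s := (Finset.mem_filter.mp p.2).1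
      have hqs : q.1 ∈ s := (Finset.mem_filter.mp q.2).1
      apply hs p.1 hps q.1 hqs
      apply adjZ
      rw [SimpleGraph.boxProd_adj] at hadj ⊢
      rcases hadj with ⟨h1, h2⟩ | ⟨h1, h2⟩
      · exact Or.inl ⟨h1, h2⟩
      · exact Or.inr ⟨h1, congrArg Subtype.val h2⟩
    calc s1.card = (s1.attach.image g).card := by
          rw [Finset.card_image_of_injective _ hginj, Finset.card_attach]
      _ ≤ _ := indep_card_le_indepNum _ _ hindep
  · -- s2 maps into X □ (derived Y)
    have hmem2 : ∀ q : {p // p ∈ s2}, deg Y q.1.1.2 < maxDeg Y := by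
      intro q
      have h1 := (Finset.mem_filter.mp q.2).2
      have h2 := memderiv q.1 (Finset.mem_filter.mp q.2).1
      tauto
    let g : {p // p ∈ s2} → V × {w : W | deg Y w < maxDeg Y} :=
      fun q => (q.1.1.1, ⟨q.1.1.2, hmem2 q⟩)
    have hginj : Function.Injective g := by
      intro p q h
      have h1 : p.1.1.1 = q.1.1.1 := congrArg (fun z : V × {w : W | deg Y w < maxDeg Y} => z.1) h
      have h2 : p.1.1.2 = q.1.1.2 := congrArg (fun z => (z.2 : W)) h
      exact Subtype.ext (Subtype.ext (Prod.ext h1 h2))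
    have hindep : ∀ v ∈ s2.attach.image g, ∀ w ∈ s2.attach.image g,
        ¬ (X.boxProd (derived Y)).Adj v w := by
      simp only [Finset.mem_image, Finset.mem_attach, true_and]
      rintro v ⟨p, rfl⟩ w ⟨q, rfl⟩ hadj
      have hps : p.1 ∈ s := (Finset.mem_filter.mp p.2).1
      have hqs : q.1 ∈ s := (Finset.mem_filter.mp q.2).1
      apply hs p.1 hps q.1 hqs
      apply adjZ
      rw [SimpleGraph.boxProd_adj] at hadj ⊢
      rcases hadj with ⟨h1, h2⟩ | ⟨h1, h2⟩
      · exact Or.inl ⟨h1, congrArg Subtype.val h2⟩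
      · exact Or.inr ⟨h1, h2⟩
    calc s2.card = (s2.attach.image g).card := by
          rw [Finset.card_image_of_injective _ hginj, Finset.card_attach]
      _ ≤ _ := indep_card_le_indepNum _ _ hindep
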